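/- arXiv:2011.02465 — 4 statements merged into one kernel-verified Lean document; each statement's English description precedes it below -/
import Mathlib

section
/- Let U be an N×N unitary complex matrix and x a nonzero complex number. Then det(1 − x·U) = (−x)^N · det(U) · conj( det(1 − (conj x)^{−1} · U) ). -/
open Matrix

/-- Functional equation of the characteristic polynomial of a unitary matrix:
`det(1 − x·U) = (−x)^N · det U · conj( det(1 − (conj x)⁻¹ · U) )`. -/
theorem unitary_charpoly_functional_equation
    (N : ℕ) (U : Matrix (Fin N) (Fin N) ℂ) (hU : U * Uᴴ = 1) (x : ℂ) (hx : x ≠ 0) :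
    (1 - x • U).det
      = (-x) ^ N * U.det * (starRingEnd ℂ) ((1 - ((starRingEnd ℂ) x)⁻¹ • U).det) := by
  have h1 : (starRingEnd ℂ) ((1 - ((starRingEnd ℂ) x)⁻¹ • U).det)
      = (1 - x⁻¹ • Uᴴ).det := by
    rw [starRingEnd_apply, ← Matrix.det_conjTranspose, conjTranspose_sub, conjTranspose_one,
      conjTranspose_smul]
    simp only [starRingEnd_apply, star_inv₀, star_star]
  rw [h1, mul_assoc, ← Matrix.det_mul, mul_sub, mul_one, Matrix.mul_smul, hU]
  have hdet := Matrix.det_smul (U - x⁻¹ • (1 : Matrix (Fin N) (Fin N) ℂ)) (-x)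
  rw [Fintype.card_fin] at hdet
  rw [← hdet, smul_sub, smul_smul]
  have : (-x) * x⁻¹ = -1 := by field_simp
  rw [this]
  congr 1
  ext i j
  simp [Matrix.one_apply]
  ring
end

section
/- Let x_1, …, x_k be pairwise distinct complex numbers with k ≥ 1, and let N be a natural number. Then h_N(x_1, …, x_k) = ∑_{j=1}^{k} x_j^{N + k − 1} · ∏_{m ≠ j} (x_j − x_m)^{−1}. -/
open Finset

section Aux

open Polynomial

/-- Key Lagrange moment lemma: the `(card-1)`-th coefficient of the interpolation of `X^n`. -/
lemma lagrange_moment' {F : Type*} [Field F] {ι : Type*} [DecidableEq ι]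
    (s : Finset ι) (v : ι → F) (hvs : Set.InjOn v s) (n : ℕ) (hn : n + 1 < s.card) :
    ∑ i ∈ s, v i ^ n * ∏ j ∈ s.erase i, (v i - v j)⁻¹ = 0 := by
  have hdeg : ((X : F[X]) ^ n).degree < s.card := by
    simpa [degree_X_pow] using (by exact_mod_cast Nat.lt_of_succ_lt hn : (n : WithBot ℕ) < s.card)
  have h := (Lagrange.eq_interpolate hvs hdeg).symm
  have hc := congrArg (fun p : F[X] => p.coeff (s.card - 1)) h
  simp only [Lagrange.interpolate_apply, finset_sum_coeff, coeff_C_mul, eval_pow, eval_X] at hc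
  have hb : ∀ i ∈ s, (Lagrange.basis s v i).coeff (s.card - 1) = Lagrange.nodalWeight s v i := by
    intro i hi
    rw [Lagrange.basis_eq_prod_sub_inv_mul_nodal_div hi, ← Lagrange.nodal_erase_eq_nodal_div hi,
      coeff_C_mul]
    have hmonic : (Lagrange.nodal (s.erase i) v).Monic := Lagrange.nodal_monic
    have hdeg' : (Lagrange.nodal (s.erase i) v).natDegree = s.card - 1 := by
      rw [Lagrange.natDegree_nodal, card_erase_of_mem hi]
    rw [← hdeg', hmonic.coeff_natDegree, mul_one]
  rw [Finset.sum_congr rfl (fun i hi => by rw [hb i hi])] at hc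
  rw [coeff_X_pow] at hc
  have hne : ¬(s.card - 1 = n) := by omega
  simpa [Lagrange.nodalWeight, hne] using hc

/-- Geometric sum over the antidiagonal. -/
lemma geom_antidiag' {F : Type*} [Field F] (a b : F) (hab : a ≠ b) (N : ℕ) :
    ∑ p ∈ Finset.HasAntidiagonal.antidiagonal N, a ^ p.1 * b ^ p.2
      = (a ^ (N+1) - b ^ (N+1)) * (a - b)⁻¹ := by
  rw [Finset.Nat.sum_antidiagonal_eq_sum_range_succ_mk]
  have h := geom_sum₂_mul a b (N+1)
  have hne : a - b ≠ 0 := sub_ne_zero_of_ne hab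
  rw [eq_mul_inv_iff_mul_eq₀ hne, ← h]
  norm_num

lemma prod_erase_succ' {M : Type*} [CommMonoid M] {k : ℕ} (f : Fin (k+1) → M) (j : Fin k) :
    ∏ m ∈ Finset.univ.erase j.succ, f m = f 0 * ∏ m ∈ Finset.univ.erase j, f m.succ := by
  have hset : (Finset.univ.erase j.succ : Finset (Fin (k+1)))
      = insert 0 ((Finset.univ.erase j).image Fin.succ) := by
    ext m
    induction m using Fin.cases with
    | zero => simp [(Fin.succ_ne_zero j).symm]
    | succ i =>
      simp [Fin.succ_injective, (Fin.succ_injective k).ne_iff, Fin.succ_ne_zero,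
        (Fin.succ_ne_zero i).symm]
  have h0 : (0 : Fin (k+1)) ∉ (Finset.univ.erase j).image Fin.succ := by
    simp only [Finset.mem_image]
    rintro ⟨a, -, ha⟩
    exact Fin.succ_ne_zero a ha
  rw [hset, Finset.prod_insert h0,
    Finset.prod_image (fun a _ b _ h => Fin.succ_injective k h)]

lemma prod_erase_zero' {M : Type*} [CommMonoid M] {k : ℕ} (f : Fin (k+1) → M) :
    ∏ m ∈ Finset.univ.erase (0 : Fin (k+1)), f m = ∏ j : Fin k, f j.succ := by
  have hset : (Finset.univ.erase (0 : Fin (k+1)))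
      = Finset.univ.image Fin.succ := by
    ext m
    induction m using Fin.cases with
    | zero =>
      simp only [Finset.mem_erase, Finset.mem_image]
      constructor
      · rintro ⟨h, -⟩; exact absurd rfl h
      · rintro ⟨a, -, ha⟩; exact absurd ha (Fin.succ_ne_zero a)
    | succ i => simp [Fin.succ_ne_zero]
  rw [hset, Finset.prod_image (fun a _ b _ h => Fin.succ_injective k h)]

end Aux

/-- The complete homogeneous symmetric polynomial of degree `n`. -/
def completeHomog {R : Type*} [CommSemiring R] (k n : ℕ) (x : Fin k → R) : R :=
  ∑ m ∈ Finset.Nat.antidiagonalTuple k n, ∏ i, x i ^ m i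

lemma completeHomog_one' {R : Type*} [CommSemiring R] (N : ℕ) (x : Fin 1 → R) :
    completeHomog 1 N x = x 0 ^ N := by
  simp [completeHomog, Finset.Nat.antidiagonalTuple_one]

lemma completeHomog_succ' {R : Type*} [CommSemiring R] (k N : ℕ) (x : Fin (k+1) → R) :
    completeHomog (k+1) N x
      = ∑ p ∈ Finset.HasAntidiagonal.antidiagonal N, x 0 ^ p.1 * completeHomog k p.2 (x ∘ Fin.succ) := by
  classical
  simp only [completeHomog, Finset.mul_sum]
  rw [Finset.sum_sigma']
  refine Finset.sum_nbij' (fun m => ⟨(m 0, N - m 0), Fin.tail m⟩)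
    (fun pt => Fin.cons pt.1.1 pt.2) ?_ ?_ ?_ ?_ ?_
  · intro m hm
    rw [Finset.Nat.mem_antidiagonalTuple] at hm
    have h0 : m 0 ≤ N := hm ▸ Finset.single_le_sum (fun i _ => Nat.zero_le _) (mem_univ 0)
    refine Finset.mem_sigma.2 ⟨?_, ?_⟩
    · simp [Finset.mem_antidiagonal, Nat.add_sub_cancel' h0]
    · rw [Finset.Nat.mem_antidiagonalTuple]
      have h2 : ∑ i, Fin.tail m i = ∑ i : Fin k, m i.succ := rfl
      have h3 := Fin.sum_univ_succ m
      rw [hm] at h3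
      rw [h2, ← Nat.sub_eq_of_eq_add (by omega : N = (∑ i : Fin k, m i.succ) + m 0)]
  · intro pt hpt
    rw [Finset.mem_sigma, Finset.HasAntidiagonal.mem_antidiagonal, Finset.Nat.mem_antidiagonalTuple] at hpt
    rw [Finset.Nat.mem_antidiagonalTuple, Fin.sum_univ_succ]
    simp only [Fin.cons_zero, Fin.cons_succ]
    rw [hpt.2]
    exact hpt.1
  · intro m hm
    exact Fin.cons_self_tail m
  · intro pt hpt
    rw [Finset.mem_sigma, Finset.HasAntidiagonal.mem_antidiagonal, Finset.Nat.mem_antidiagonalTuple] at hpt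
    obtain ⟨⟨a, b⟩, t⟩ := pt
    simp only at hpt ⊢
    have h1 : (Fin.cons a t : Fin (k+1) → ℕ) 0 = a := rfl
    refine Sigma.ext ?_ ?_
    · simp only [h1]
      have : N - a = b := by omega
      simp [this]
    · simp [Fin.tail_cons]
  · intro m hm
    rw [Fin.prod_univ_succ]
    rfl

lemma residue_aux : ∀ (n : ℕ) (x : Fin (n+1) → ℂ), Function.Injective x → ∀ N : ℕ,
    completeHomog (n+1) N x
      = ∑ j, x j ^ (N + n) * ∏ m ∈ Finset.univ.erase j, (x j - x m)⁻¹ := by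
  intro n
  induction n with
  | zero =>
    intro x hx N
    simp [completeHomog_one']
  | succ n IH =>
    intro x hx N
    have hyinj : Function.Injective (x ∘ Fin.succ) := hx.comp (Fin.succ_injective _)
    set y : Fin (n+1) → ℂ := x ∘ Fin.succ with hy
    have hyne : ∀ j : Fin (n+1), y j ≠ x 0 := fun j h => (Fin.succ_ne_zero j) (hx h)
    set c : Fin (n+1) → ℂ := fun j => ∏ m ∈ Finset.univ.erase j, (y j - y m)⁻¹ with hc
    set CC : Fin (n+2) → ℂ := fun j => ∏ m ∈ Finset.univ.erase j, (x j - x m)⁻¹ with hCC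
    have hCsucc : ∀ j : Fin (n+1), CC j.succ = (y j - x 0)⁻¹ * c j := by
      intro j
      exact prod_erase_succ' (fun m => (x j.succ - x m)⁻¹) j
    have hC0 : CC 0 = ∏ j : Fin (n+1), (x 0 - y j)⁻¹ :=
      prod_erase_zero' (fun m => (x 0 - x m)⁻¹)
    -- the Lagrange moment identity
    have hA : ∑ i : Fin (n+2), x i ^ n * CC i = 0 := by
      have := lagrange_moment' Finset.univ x hx.injOn n (by simp)
      simpa [hCC] using this
    rw [Fin.sum_univ_succ] at hA
    have hAkey : ∑ j : Fin (n+1), (y j - x 0)⁻¹ * (y j ^ n * c j) = - (x 0 ^ n * CC 0) := by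
      have h1 : ∑ j : Fin (n+1), x j.succ ^ n * CC j.succ
          = ∑ j : Fin (n+1), (y j - x 0)⁻¹ * (y j ^ n * c j) := by
        refine Finset.sum_congr rfl fun j _ => ?_
        rw [hCsucc j]
        show y j ^ n * ((y j - x 0)⁻¹ * c j) = _
        ring
      rw [h1] at hA
      linear_combination hA
    -- main computation
    calc completeHomog (n+2) N x
        = ∑ p ∈ Finset.HasAntidiagonal.antidiagonal N, x 0 ^ p.1 * completeHomog (n+1) p.2 y := by
          rw [completeHomog_succ' (n+1) N x]
      _ = ∑ p ∈ Finset.HasAntidiagonal.antidiagonal N, ∑ j, x 0 ^ p.1 * y j ^ p.2 * (y j ^ n * c j) := by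
          refine Finset.sum_congr rfl fun p _ => ?_
          rw [IH y hyinj p.2, Finset.mul_sum]
          refine Finset.sum_congr rfl fun j _ => ?_
          rw [pow_add]
          ring
      _ = ∑ j, (∑ p ∈ Finset.HasAntidiagonal.antidiagonal N, x 0 ^ p.1 * y j ^ p.2) * (y j ^ n * c j) := by
          rw [Finset.sum_comm]
          exact Finset.sum_congr rfl fun j _ => (Finset.sum_mul _ _ _).symm
      _ = ∑ j, (x 0 ^ (N+1) - y j ^ (N+1)) * (x 0 - y j)⁻¹ * (y j ^ n * c j) := by
          refine Finset.sum_congr rfl fun j _ => ?_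
          rw [geom_antidiag' (x 0) (y j) (fun h => hyne j h.symm) N]
      _ = ∑ j, (y j ^ (N+n+1) * ((y j - x 0)⁻¹ * c j)
            - x 0 ^ (N+1) * ((y j - x 0)⁻¹ * (y j ^ n * c j))) := by
          refine Finset.sum_congr rfl fun j _ => ?_
          have hinv : (x 0 - y j)⁻¹ = -(y j - x 0)⁻¹ := by
            rw [← neg_sub, inv_neg]
          rw [hinv, show N+n+1 = (N+1)+n by ring, pow_add]
          ring
      _ = ∑ j, y j ^ (N+n+1) * ((y j - x 0)⁻¹ * c j)
            - x 0 ^ (N+1) * ∑ j, (y j - x 0)⁻¹ * (y j ^ n * c j) := by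
          rw [Finset.sum_sub_distrib, Finset.mul_sum]
      _ = ∑ j : Fin (n+2), x j ^ (N + (n+1)) * CC j := by
          have h2 : ∑ j : Fin (n+1), x j.succ ^ (N + (n+1)) * CC j.succ
              = ∑ j : Fin (n+1), y j ^ (N+n+1) * ((y j - x 0)⁻¹ * c j) := by
            refine Finset.sum_congr rfl fun j _ => ?_
            rw [hCsucc j]
            show y j ^ (N + (n+1)) * ((y j - x 0)⁻¹ * c j) = _
            rw [← add_assoc]
          rw [hAkey]
          conv_rhs => rw [Fin.sum_univ_succ]
          rw [h2, show N+(n+1) = (N+1)+n by ring, pow_add]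
          ring

/-- Partial-fraction (residue) expansion:
for pairwise distinct `x_1,…,x_k` (`k ≥ 1`),
`h_N(x) = ∑_j x_j^{N+k−1} ∏_{m≠j} (x_j − x_m)⁻¹`. -/
theorem completeHomog_eq_residue_sum (k : ℕ) (hk : 1 ≤ k) (x : Fin k → ℂ)
    (hinj : Function.Injective x) (N : ℕ) :
    completeHomog k N x
      = ∑ j, x j ^ (N + k - 1) * ∏ m ∈ Finset.univ.erase j, (x j - x m)⁻¹ := by
  obtain ⟨n, rfl⟩ : ∃ n, k = n + 1 := ⟨k - 1, by omega⟩
  have h := residue_aux n x hinj N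
  rw [h]
  refine Finset.sum_congr rfl fun j _ => ?_
  congr 2
end

section
/- Let x_1, …, x_k be pairwise distinct nonzero complex numbers (k ≥ 1), let y_1, …, y_m be complex numbers, and let N be a natural number with N > m − k. Then the coefficient of t^N in the formal power series (∏_{r=1}^{m} (1 − t y_r)) · (∏_{i=1}^{k} (1 − t x_i))^{−1} equals ∑_{j=1}^{k} x_j^N · ( ∏_{r=1}^{m} (1 − y_r / x_j) ) / ( ∏_{i ≠ j} (1 − x_i / x_j) ). -/
open Finset PowerSeries

lemma geom_mul_aux (a : ℂ) :
    (PowerSeries.mk fun n => a ^ n) * (1 - PowerSeries.C (R := ℂ) a * PowerSeries.X) = 1 := by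
  ext n
  rw [mul_sub, mul_one, map_sub]
  cases n with
  | zero => simp
  | succ n =>
    have h : (PowerSeries.mk fun n => a ^ n) * (PowerSeries.C (R := ℂ) a * PowerSeries.X)
        = (PowerSeries.C (R := ℂ) a * PowerSeries.mk fun n => a ^ n) * PowerSeries.X := by ring
    rw [h, PowerSeries.coeff_succ_mul_X]
    simp [pow_succ, mul_comm]

lemma inv_one_sub_CX (a : ℂ) :
    (1 - PowerSeries.C (R := ℂ) a * PowerSeries.X)⁻¹ = PowerSeries.mk fun n => a ^ n := by
  rw [PowerSeries.inv_eq_iff_mul_eq_one]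
  · exact geom_mul_aux a
  · simp

lemma one_sub_CX_eq (a : ℂ) (ha : a ≠ 0) :
    (1 : Polynomial ℂ) - Polynomial.C a * Polynomial.X
      = Polynomial.C (-a) * (Polynomial.X - Polynomial.C a⁻¹) := by
  rw [mul_sub, ← Polynomial.C_mul, neg_mul, mul_inv_cancel₀ ha, map_neg, map_neg,
    Polynomial.C_1]
  ring

lemma coePS {ι : Type*} (s : Finset ι) (x : ι → ℂ) :
    ((∏ i ∈ s, (1 - Polynomial.C (x i) * Polynomial.X) : Polynomial ℂ) : PowerSeries ℂ)
      = ∏ i ∈ s, (1 - PowerSeries.C (R := ℂ) (x i) * PowerSeries.X) := by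
  rw [← Polynomial.coeToPowerSeries.ringHom_apply, map_prod]
  simp [Polynomial.coeToPowerSeries.ringHom_apply, Polynomial.coe_sub, Polynomial.coe_one,
    Polynomial.coe_mul, Polynomial.coe_C, Polynomial.coe_X]

lemma natDegree_one_sub_C_mul_X_le (a : ℂ) :
    ((1 : Polynomial ℂ) - Polynomial.C a * Polynomial.X).natDegree ≤ 1 := by
  refine le_trans (Polynomial.natDegree_sub_le _ _) (max_le (by simp) ?_)
  exact le_trans (Polynomial.natDegree_C_mul_le _ _) (by simp)

/-- Residue-sum expression for the supersymmetric complete homogeneous function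
`h_N[X − Y]`: for pairwise distinct nonzero `x_1,…,x_k`, complex `y_1,…,y_m`, and
`N > m − k`, the coefficient of `t^N` in
`(∏_r (1 − t y_r)) · (∏_i (1 − t x_i))⁻¹` equals
`∑_j x_j^N · (∏_r (1 − y_r/x_j)) / (∏_{i≠j} (1 − x_i/x_j))`. -/
theorem supersym_completeHomog_residue_sum
    (k m N : ℕ) (hk : 1 ≤ k) (x : Fin k → ℂ) (y : Fin m → ℂ)
    (hx0 : ∀ i, x i ≠ 0) (hinj : Function.Injective x)
    (hN : (m : ℤ) - (k : ℤ) < (N : ℤ)) :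
    PowerSeries.coeff (R := ℂ) N
        ((∏ r, (1 - PowerSeries.C (R := ℂ) (y r) * PowerSeries.X)) *
          (∏ i, (1 - PowerSeries.C (R := ℂ) (x i) * PowerSeries.X))⁻¹)
      = ∑ j, x j ^ N * (∏ r, (1 - y r / x j)) /
          ∏ i ∈ Finset.univ.erase j, (1 - x i / x j) := by
  classical
  -- residue coefficients
  set A : Fin k → ℂ := fun j =>
    (∏ r, (1 - y r / x j)) / ∏ i ∈ Finset.univ.erase j, (1 - x i / x j) with hA
  have hdenom : ∀ j, (∏ i ∈ Finset.univ.erase j, (1 - x i / x j)) ≠ 0 := by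
    intro j
    refine Finset.prod_ne_zero_iff.mpr fun i hi => ?_
    have hne : x i ≠ x j := fun h => (Finset.mem_erase.mp hi).1 (hinj h)
    intro h
    have : x i / x j = 1 := by linear_combination -h
    exact hne ((div_eq_one_iff_eq (hx0 j)).mp this)
  -- polynomials
  set P : Polynomial ℂ := ∏ r, (1 - Polynomial.C (y r) * Polynomial.X) with hP
  set D : Polynomial ℂ := ∏ i, (1 - Polynomial.C (x i) * Polynomial.X) with hD
  set S : Polynomial ℂ := ∑ j, Polynomial.C (A j) *
    ∏ i ∈ Finset.univ.erase j, (1 - Polynomial.C (x i) * Polynomial.X) with hS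
  -- evaluation at (x j)⁻¹ kills P - S
  have heval : ∀ j, (P - S).eval (x j)⁻¹ = 0 := by
    intro j
    have hPe : P.eval (x j)⁻¹ = ∏ r, (1 - y r / x j) := by
      simp [hP, Polynomial.eval_prod, div_eq_mul_inv]
    have hSe : S.eval (x j)⁻¹ = ∏ r, (1 - y r / x j) := by
      rw [hS, Polynomial.eval_finset_sum]
      rw [Finset.sum_eq_single j]
      · rw [Polynomial.eval_mul, Polynomial.eval_C, Polynomial.eval_prod]
        have : ∀ i ∈ Finset.univ.erase j,
            ((1 : Polynomial ℂ) - Polynomial.C (x i) * Polynomial.X).eval (x j)⁻¹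
              = 1 - x i / x j := by
          intro i _
          simp [div_eq_mul_inv]
        rw [Finset.prod_congr rfl this, hA]
        exact div_mul_cancel₀ _ (hdenom j)
      · intro j' _ hj'
        rw [Polynomial.eval_mul, Polynomial.eval_prod]
        have hjmem : j ∈ Finset.univ.erase j' := Finset.mem_erase.mpr ⟨Ne.symm hj', Finset.mem_univ j⟩
        rw [Finset.prod_eq_zero hjmem (by simp [mul_inv_cancel₀ (hx0 j)])]
        ring
      · intro h; exact absurd (Finset.mem_univ j) h
    rw [Polynomial.eval_sub, hPe, hSe, sub_self]
  -- divisibility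
  have hxinv_inj : Function.Injective fun j => (x j)⁻¹ :=
    fun a b h => hinj (by simpa using congrArg Inv.inv h)
  have hdvd0 : (∏ j, (Polynomial.X - Polynomial.C (x j)⁻¹)) ∣ (P - S) := by
    refine Fintype.prod_dvd_of_coprime (Polynomial.pairwise_coprime_X_sub_C hxinv_inj)
      fun j => ?_
    exact Polynomial.dvd_iff_isRoot.mpr (heval j)
  set c : ℂ := ∏ i, (-(x i)) with hc
  have hc0 : c ≠ 0 := Finset.prod_ne_zero_iff.mpr fun i _ => neg_ne_zero.mpr (hx0 i)
  have hDfac : D = Polynomial.C c * ∏ j, (Polynomial.X - Polynomial.C (x j)⁻¹) := by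
    rw [hD, hc, map_prod, ← Finset.prod_mul_distrib]
    exact Finset.prod_congr rfl fun i _ => one_sub_CX_eq (x i) (hx0 i)
  have hDdvd : D ∣ (P - S) := by
    obtain ⟨Q₀, hQ₀⟩ := hdvd0
    refine ⟨Polynomial.C c⁻¹ * Q₀, ?_⟩
    rw [hQ₀, hDfac]
    have hcc : Polynomial.C c * Polynomial.C c⁻¹ = 1 := by
      rw [← Polynomial.C_mul, mul_inv_cancel₀ hc0, Polynomial.C_1]
    linear_combination (-((∏ j, (Polynomial.X - Polynomial.C (x j)⁻¹)) * Q₀)) * hcc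
  obtain ⟨Q, hQ⟩ := hDdvd
  -- degree bounds
  have hdegD : D.degree = (k : ℕ) := by
    rw [hDfac, Polynomial.degree_C_mul hc0, Polynomial.degree_prod]
    simp [Polynomial.degree_X_sub_C]
  have hdegP : P.natDegree ≤ m := by
    refine le_trans (Polynomial.natDegree_prod_le _ _) ?_
    refine le_trans (Finset.sum_le_sum (fun r _ => natDegree_one_sub_C_mul_X_le (y r))) ?_
    simp
  have hdegS : S.natDegree ≤ k - 1 := by
    refine Polynomial.natDegree_sum_le_of_forall_le _ _ fun j _ => ?_
    refine le_trans (Polynomial.natDegree_C_mul_le _ _) ?_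
    refine le_trans (Polynomial.natDegree_prod_le _ _) ?_
    refine le_trans (Finset.sum_le_sum (fun i _ => natDegree_one_sub_C_mul_X_le (x i))) ?_
    simp [Finset.card_erase_of_mem]
  have hdegR : (P - S).degree < ((N + k : ℕ) : WithBot ℕ) := by
    refine lt_of_le_of_lt (Polynomial.degree_le_natDegree) ?_
    have h1 : (P - S).natDegree ≤ max P.natDegree S.natDegree := Polynomial.natDegree_sub_le _ _
    have h2 : (P - S).natDegree < N + k := by
      have hm : m < N + k := by omega
      have hk1 : k - 1 < N + k := by omega
      omega
    exact_mod_cast h2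
  have hdegQ : Q.degree < (N : WithBot ℕ) := by
    by_cases hQ0 : Q = 0
    · rw [hQ0, Polynomial.degree_zero]
      exact WithBot.bot_lt_coe N
    · have hD0 : D ≠ 0 := fun h => by
        rw [h, Polynomial.degree_zero] at hdegD
        exact absurd hdegD.symm (by simp)
      have hmul : (P - S).degree = D.degree + Q.degree := by
        rw [hQ, Polynomial.degree_mul]
      rw [hmul, hdegD, Polynomial.degree_eq_natDegree hQ0] at hdegR
      have : k + Q.natDegree < N + k := by exact_mod_cast hdegR
      have : Q.natDegree < N := by omega
      rw [Polynomial.degree_eq_natDegree hQ0]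
      exact_mod_cast this
  have hcoeffQ : Q.coeff N = 0 := Polynomial.coeff_eq_zero_of_degree_lt hdegQ
  -- move to power series
  set DP : PowerSeries ℂ := ∏ i, (1 - PowerSeries.C (R := ℂ) (x i) * PowerSeries.X) with hDP
  have hDPconst : PowerSeries.constantCoeff (R := ℂ) DP ≠ 0 := by
    rw [hDP, map_prod]
    simp
  set T : PowerSeries ℂ := (Q : PowerSeries ℂ)
    + ∑ j, PowerSeries.C (R := ℂ) (A j) * PowerSeries.mk (fun n => (x j) ^ n) with hT
  have hcast : ((P : Polynomial ℂ) : PowerSeries ℂ) - ((S : Polynomial ℂ) : PowerSeries ℂ)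
      = ((D : Polynomial ℂ) : PowerSeries ℂ) * ((Q : Polynomial ℂ) : PowerSeries ℂ) := by
    have := congrArg (Polynomial.coeToPowerSeries.ringHom) hQ
    simpa only [map_sub, map_mul, Polynomial.coeToPowerSeries.ringHom_apply] using this
  have hkey : (∏ r, (1 - PowerSeries.C (R := ℂ) (y r) * PowerSeries.X)) * DP⁻¹ = T := by
    symm
    rw [PowerSeries.eq_mul_inv_iff_mul_eq hDPconst]
    have hterm : ∀ j : Fin k,
        (PowerSeries.mk fun n => (x j) ^ n) * DP
          = ∏ i ∈ Finset.univ.erase j, (1 - PowerSeries.C (R := ℂ) (x i) * PowerSeries.X) := by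
      intro j
      rw [hDP, ← Finset.mul_prod_erase Finset.univ _ (Finset.mem_univ j), ← mul_assoc,
        geom_mul_aux, one_mul]
    rw [hT, add_mul, Finset.sum_mul]
    have hsum : ∀ j : Fin k,
        PowerSeries.C (R := ℂ) (A j) * PowerSeries.mk (fun n => (x j) ^ n) * DP
          = ((Polynomial.C (A j) *
              ∏ i ∈ Finset.univ.erase j, (1 - Polynomial.C (x i) * Polynomial.X)
                : Polynomial ℂ) : PowerSeries ℂ) := by
      intro j
      rw [mul_assoc, hterm j, Polynomial.coe_mul, Polynomial.coe_C, coePS]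
    have hSc : ((S : Polynomial ℂ) : PowerSeries ℂ)
        = ∑ j, ((Polynomial.C (A j) *
            ∏ i ∈ Finset.univ.erase j, (1 - Polynomial.C (x i) * Polynomial.X)
              : Polynomial ℂ) : PowerSeries ℂ) := by
      rw [hS, ← Polynomial.coeToPowerSeries.ringHom_apply, map_sum]
      simp only [Polynomial.coeToPowerSeries.ringHom_apply]
    rw [Finset.sum_congr rfl fun j _ => hsum j, ← hSc]
    have : (Q : PowerSeries ℂ) * DP = ((D : Polynomial ℂ) : PowerSeries ℂ) * (Q : PowerSeries ℂ) := by
      rw [hD, coePS, ← hDP, mul_comm]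
    rw [this, ← hcast, hP, coePS]
    ring
  rw [hkey, hT, map_add, map_sum]
  have hQcoeff : PowerSeries.coeff (R := ℂ) N (Q : PowerSeries ℂ) = 0 := by
    rw [Polynomial.coeff_coe]
    exact hcoeffQ
  rw [hQcoeff, zero_add]
  refine Finset.sum_congr rfl fun j _ => ?_
  rw [PowerSeries.coeff_C_mul, PowerSeries.coeff_mk]
  simp only [hA]
  ring
end

section
/- Let E_1, …, E_k be i.i.d. random variables with the exponential distribution of rate 1 on [0,∞). Then for all real numbers x_1, …, x_k and every natural number n, E[ ( ∑_{j=1}^{k} x_j E_j )^n ] = n! · h_n(x_1, …, x_k), where h_n is the complete homogeneous symmetric polynomial of degree n. -/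
open MeasureTheory ProbabilityTheory Finset

lemma expDensityMeas : Measurable (fun t : ℝ => if 0 ≤ t then Real.exp (-t) else 0) := by
  exact Measurable.ite (measurableSet_le measurable_const measurable_id)
    (by fun_prop) measurable_const

lemma expAux (m : ℕ) :
    IntegrableOn (fun t : ℝ => Real.exp (-t) * t ^ m) (Set.Ioi 0) ∧
    ∫ t in Set.Ioi (0:ℝ), Real.exp (-t) * t ^ m = m.factorial := by
  have h1 : (0:ℝ) < m + 1 := by positivity
  have hcongr : ∀ t ∈ Set.Ioi (0:ℝ),
      Real.exp (-t) * t ^ ((m + 1 : ℝ) - 1) = Real.exp (-t) * t ^ m := by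
    intro t ht
    rw [show ((m:ℝ) + 1) - 1 = (m:ℝ) by ring, Real.rpow_natCast]
  constructor
  · exact (Real.GammaIntegral_convergent h1).congr_fun
      (fun t ht => hcongr t ht) measurableSet_Ioi
  · have := Real.Gamma_eq_integral h1
    rw [setIntegral_congr_fun measurableSet_Ioi hcongr] at this
    rw [← this]
    rw [show ((m:ℝ)+1) = ((m:ℕ) + 1 : ℝ) from rfl, Real.Gamma_nat_eq_factorial]

lemma expMoment (m : ℕ) :
    Integrable (fun t : ℝ => t ^ m)
      (volume.withDensity fun t => ENNReal.ofReal (if 0 ≤ t then Real.exp (-t) else 0)) ∧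
    ∫ t, t ^ m ∂(volume.withDensity fun t => ENNReal.ofReal (if 0 ≤ t then Real.exp (-t) else 0))
      = m.factorial := by
  set f : ℝ → ℝ := fun t => if 0 ≤ t then Real.exp (-t) else 0 with hf
  have hfnn : ∀ t, 0 ≤ f t := by
    intro t; simp only [hf]; split <;> positivity
  have hind : ∀ t, t ^ m * f t = Set.indicator (Set.Ici (0:ℝ))
      (fun t => Real.exp (-t) * t ^ m) t := by
    intro t
    simp only [hf, Set.indicator_apply, Set.mem_Ici, mul_ite, mul_zero, mul_comm]
  have hIci : IntegrableOn (fun t : ℝ => Real.exp (-t) * t ^ m) (Set.Ici 0) := by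
    rw [integrableOn_Ici_iff_integrableOn_Ioi]; exact (expAux m).1
  constructor
  · rw [integrable_withDensity_iff (by exact ENNReal.measurable_ofReal.comp expDensityMeas)
      (Filter.Eventually.of_forall fun t => ENNReal.ofReal_lt_top)]
    have : (fun t : ℝ => t ^ m * (ENNReal.ofReal (f t)).toReal)
        = Set.indicator (Set.Ici (0:ℝ)) (fun t => Real.exp (-t) * t ^ m) := by
      funext t; rw [ENNReal.toReal_ofReal (hfnn t), hind t]
    rw [this, integrable_indicator_iff measurableSet_Ici]
    exact hIci
  · have hrw : (fun t => ENNReal.ofReal (f t)) = fun t => ((f t).toNNReal : ENNReal) := rfl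
    rw [hrw, integral_withDensity_eq_integral_smul (by exact expDensityMeas.real_toNNReal)]
    have : (fun t : ℝ => (f t).toNNReal • t ^ m)
        = Set.indicator (Set.Ici (0:ℝ)) (fun t => Real.exp (-t) * t ^ m) := by
      funext t
      rw [NNReal.smul_def, smul_eq_mul, Real.coe_toNNReal _ (hfnn t), mul_comm, hind t]
    rw [this, integral_indicator measurableSet_Ici, MeasureTheory.integral_Ici_eq_integral_Ioi,
      (expAux m).2]

lemma integral_prod_of_iIndep {Ω : Type*} [MeasurableSpace Ω] {μ : Measure Ω}
    [IsProbabilityMeasure μ] {ι : Type*} {F : ι → Ω → ℝ}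
    (hindep : iIndepFun F μ) (hmeas : ∀ i, Measurable (F i))
    (hint : ∀ i, Integrable (F i) μ) (s : Finset ι) :
    Integrable (fun ω => ∏ i ∈ s, F i ω) μ ∧
      ∫ ω, ∏ i ∈ s, F i ω ∂μ = ∏ i ∈ s, ∫ ω, F i ω ∂μ := by
  classical
  induction s using Finset.cons_induction with
  | empty => simp
  | cons a s ha ih =>
    have hIndep : IndepFun (∏ j ∈ s, F j) (F a) μ :=
      iIndepFun.indepFun_finset_prod_of_notMem hindep hmeas ha
    have hps : (fun ω => ∏ j ∈ s, F j ω) = ∏ j ∈ s, F j := by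
      funext ω; rw [Finset.prod_apply]
    have hmul : (fun ω => ∏ i ∈ Finset.cons a s ha, F i ω) = F a * ∏ j ∈ s, F j := by
      funext ω; rw [Finset.prod_cons, Pi.mul_apply, Finset.prod_apply]
    have hintp : Integrable (∏ j ∈ s, F j) μ := hps ▸ ih.1
    constructor
    · rw [hmul]
      exact hIndep.symm.integrable_mul (hint a) hintp
    · rw [hmul, show (∫ ω, (F a * ∏ j ∈ s, F j) ω ∂μ) = ∫ ω, (F a * ∏ j ∈ s, F j) ω ∂μ from rfl,
        hIndep.symm.integral_mul_eq_mul_integral (hint a).aestronglyMeasurable hintp.aestronglyMeasurable, Finset.prod_cons, ← ih.2, hps]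

/-- If `E_1, …, E_k` are i.i.d. rate-one exponential random variables, then
`E[(∑_j x_j E_j)^n] = n! · h_n(x_1, …, x_k)`. -/
theorem moment_weighted_exponential_sum_eq_completeHomog
    {Ω : Type*} [MeasurableSpace Ω] (μ : Measure Ω) [IsProbabilityMeasure μ]
    (k : ℕ) (E : Fin k → Ω → ℝ)
    (hmeas : ∀ i, Measurable (E i))
    (hindep : iIndepFun E μ)
    (hdist : ∀ i, μ.map (E i)
      = volume.withDensity fun t => ENNReal.ofReal (if 0 ≤ t then Real.exp (-t) else 0))
    (x : Fin k → ℝ) (n : ℕ) :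
    ∫ ω, (∑ j, x j * E j ω) ^ n ∂μ = (n.factorial : ℝ) * completeHomog k n x := by
  classical
  -- moments of each coordinate
  have hmom : ∀ (i : Fin k) (mi : ℕ),
      Integrable (fun ω => (x i * E i ω) ^ mi) μ ∧
        ∫ ω, (x i * E i ω) ^ mi ∂μ = x i ^ mi * (mi.factorial : ℝ) := by
    intro i mi
    have hpm : Measurable (fun t : ℝ => t ^ mi) := by fun_prop
    have hbase : Integrable (fun ω => (E i ω) ^ mi) μ ∧
        ∫ ω, (E i ω) ^ mi ∂μ = (mi.factorial : ℝ) := by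
      have h1 : Integrable (fun t : ℝ => t ^ mi) (μ.map (E i)) := by
        rw [hdist i]; exact (expMoment mi).1
      have h2 : ∫ ω, (E i ω) ^ mi ∂μ = ∫ t, t ^ mi ∂(μ.map (E i)) :=
        (integral_map (hmeas i).aemeasurable hpm.aestronglyMeasurable).symm
      refine ⟨?_, by rw [h2, hdist i, (expMoment mi).2]⟩
      exact ((integrable_map_measure hpm.aestronglyMeasurable (hmeas i).aemeasurable).mp h1)
    have heq : (fun ω => (x i * E i ω) ^ mi) = fun ω => x i ^ mi * (E i ω) ^ mi := by
      funext ω; rw [mul_pow]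
    refine ⟨heq ▸ (hbase.1.const_mul _), ?_⟩
    rw [heq, integral_const_mul, hbase.2]
  -- per-monomial computation
  have hmono : ∀ m : Fin k → ℕ,
      Integrable (fun ω => ∏ i, (x i * E i ω) ^ m i) μ ∧
        ∫ ω, ∏ i, (x i * E i ω) ^ m i ∂μ = ∏ i, (x i ^ m i * ((m i).factorial : ℝ)) := by
    intro m
    have hcomp : iIndepFun
        (fun i => (fun t => (x i * t) ^ m i) ∘ E i) μ :=
      hindep.comp _ (fun i => by fun_prop)
    have := integral_prod_of_iIndep hcomp (fun i => by fun_prop)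
      (fun i => (hmom i (m i)).1) Finset.univ
    have h2 : ∫ ω, ∏ i, (x i * E i ω) ^ m i ∂μ = ∏ i, ∫ ω, (x i * E i ω) ^ m i ∂μ := this.2
    refine ⟨this.1, ?_⟩
    rw [h2]
    exact Finset.prod_congr rfl fun i _ => (hmom i (m i)).2
  -- multinomial expansion
  have hexp : ∀ ω : Ω, (∑ j, x j * E j ω) ^ n
      = ∑ m ∈ Finset.piAntidiag Finset.univ n,
          (Nat.multinomial Finset.univ m : ℝ) * ∏ i, (x i * E i ω) ^ m i := fun ω =>
    Finset.sum_pow_eq_sum_piAntidiag Finset.univ (fun j => x j * E j ω) n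
  calc ∫ ω, (∑ j, x j * E j ω) ^ n ∂μ
      = ∫ ω, ∑ m ∈ Finset.piAntidiag Finset.univ n,
          (Nat.multinomial Finset.univ m : ℝ) * ∏ i, (x i * E i ω) ^ m i ∂μ := by
        exact integral_congr_ae (Filter.Eventually.of_forall fun ω => hexp ω)
    _ = ∑ m ∈ Finset.piAntidiag Finset.univ n,
          ∫ ω, (Nat.multinomial Finset.univ m : ℝ) * ∏ i, (x i * E i ω) ^ m i ∂μ :=
        integral_finset_sum _ (fun m _ => (hmono m).1.const_mul _)
    _ = ∑ m ∈ Finset.piAntidiag Finset.univ n,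
          (Nat.multinomial Finset.univ m : ℝ) * ∏ i, (x i ^ m i * ((m i).factorial : ℝ)) := by
        refine Finset.sum_congr rfl fun m _ => ?_
        rw [integral_const_mul, (hmono m).2]
    _ = ∑ m ∈ Finset.piAntidiag Finset.univ n, (n.factorial : ℝ) * ∏ i, x i ^ m i := by
        refine Finset.sum_congr rfl fun m hm => ?_
        obtain ⟨hsum, -⟩ := Finset.mem_piAntidiag.mp hm
        have hspec : (∏ i, (m i).factorial) * Nat.multinomial Finset.univ m = n.factorial := by
          rw [Nat.multinomial_spec, hsum]
        have hc : (Nat.multinomial Finset.univ m : ℝ) * ∏ i, ((m i).factorial : ℝ)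
            = (n.factorial : ℝ) := by
          rw [← Nat.cast_prod, ← Nat.cast_mul, mul_comm, hspec]
        rw [Finset.prod_mul_distrib, show (Nat.multinomial Finset.univ m : ℝ) *
            ((∏ i, x i ^ m i) * ∏ i, ((m i).factorial : ℝ))
            = ((Nat.multinomial Finset.univ m : ℝ) * ∏ i, ((m i).factorial : ℝ))
              * ∏ i, x i ^ m i by ring, hc]
    _ = (n.factorial : ℝ) * completeHomog k n x := by
        rw [← Finset.mul_sum, completeHomog, Finset.piAntidiag_univ_fin_eq_antidiagonalTuple]
end
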